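/- arXiv:0712.3131 — 2 statements merged into one kernel-verified Lean document; each statement's English description precedes it below -/
import Mathlib

section
/- Let λ ∈ P∨, w ∈ W, i = i(λ) the minuscule index with λ + ϖ_{i}∨ ∈ Q∨, u = v_{f(i)} w and μ = λ − w⁻¹(ϖ_{f(i)}∨). Then for every positive root α of the finite root system, χ(w(α) < 0) + ⟨λ, α⟩ = χ(u(α) < 0) + ⟨μ, α⟩, where χ(A) = 1 if A holds and 0 otherwise. -/
open scoped Classical

/-- The multiplicative group structure that `AddAut M` carried in older Mathlib. -/
instance AddAut.groupOfOldMathlib (M : Type*) [Add M] : Group (AddAut M) where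
  mul g h := AddEquiv.trans h g
  one := AddEquiv.refl _
  inv := AddEquiv.symm
  mul_assoc _ _ _ := rfl
  one_mul _ := rfl
  mul_one _ := rfl
  inv_mul_cancel := AddEquiv.self_trans_symm

/- STATEMENT 7: Let λ ∈ P∨, w ∈ W, i = i(λ) the minuscule index with λ + ϖᵢ∨ ∈ Q∨,
u = v_{f(i)} w and μ = λ − w⁻¹(ϖ_{f(i)}∨).  Then for every positive root α,
χ(w(α) < 0) + ⟨λ, α⟩ = χ(u(α) < 0) + ⟨μ, α⟩. -/
theorem stmt_7
    (W : Type) [Group W] (QL Pv : Type) [AddCommGroup QL] [AddCommGroup Pv]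
    (actQ : W →* AddAut QL) (actP : W →* AddAut Pv)
    (pair : Pv →+ QL →+ ℤ)
    (hequiv : ∀ (w : W) (x : Pv) (a : QL), pair (actP w x) (actQ w a) = pair x a)
    (R : Set QL) (pos : QL → Prop)
    (hRfin : R.Finite)
    (hRW : ∀ (w : W) (a : QL), a ∈ R → actQ w a ∈ R)
    (hRneg : ∀ a, a ∈ R → -a ∈ R)
    (hsplit : ∀ a ∈ R, pos a ↔ ¬ pos (-a))
    (I : Type) [Fintype I] [DecidableEq I] (α : I → QL)
    (hα : ∀ j, α j ∈ R ∧ pos (α j))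
    (hfaith : ∀ u v : W, (∀ a ∈ R, actQ u a = actQ v a) → u = v)
    (ϖ : I → Pv) (hϖ : ∀ i j : I, pair (ϖ i) (α j) = if i = j then 1 else 0)
    (w0 : W) (hw0 : ∀ a ∈ R, pos a → ¬ pos (actQ w0 a))
    (f : I → I) (hf : ∀ j : I, α (f j) = - actQ w0 (α j))
    (w0P : I → W)
    (hw0P1 : ∀ j : I, ∀ a ∈ R, pos a → pair (ϖ j) a = 0 → ¬ pos (actQ (w0P j) a))
    (hw0P2 : ∀ j : I, ∀ a ∈ R, pos a → pair (ϖ j) a ≠ 0 → pos (actQ (w0P j) a))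
    (hw0P3 : ∀ j : I, actP (w0P j) (ϖ j) = ϖ j)
    (hw0ϖ : ∀ j : I, actP w0 (ϖ j) = - ϖ (f j))
    (Qv : AddSubgroup Pv)
    (hQvW : ∀ (u : W) (x : Pv), actP u x - x ∈ Qv)
    (w : W) (lam : Pv) (i : I)
    (hmin : ∀ a ∈ R, pos a → pair (ϖ i) a = 0 ∨ pair (ϖ i) a = 1)
    (hminf : ∀ a ∈ R, pos a → pair (ϖ (f i)) a = 0 ∨ pair (ϖ (f i)) a = 1)
    (hlam : lam + ϖ i ∈ Qv) :
    ∀ a ∈ R, pos a →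
      ((if ¬ pos (actQ w a) then (1 : ℤ) else 0) + pair lam a)
        = ((if ¬ pos (actQ ((w0 * w0P (f i)) * w) a) then (1 : ℤ) else 0)
            + pair (lam - actP w⁻¹ (ϖ (f i))) a) := by

  intro a haR hapos
  set j := f i with hj
  set b := actQ w a with hb
  have hbR : b ∈ R := hRW w a haR
  have hba : actQ w⁻¹ b = a := by
    rw [hb, map_inv]
    exact (actQ w).symm_apply_apply a
  have hpairinv : pair (actP w⁻¹ (ϖ j)) a = pair (ϖ j) b := by
    have h := hequiv w⁻¹ (ϖ j) b
    rwa [hba] at h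
  have hmul : actQ ((w0 * w0P j) * w) a = actQ w0 (actQ (w0P j) b) := by
    rw [map_mul, map_mul, hb]
    rfl
  have hw0n : ∀ c ∈ R, ¬ pos c → pos (actQ w0 c) := by
    intro c hc hcn
    have hnc : (-c) ∈ R := hRneg c hc
    have hposc : pos (-c) := by
      by_contra h; exact hcn ((hsplit c hc).mpr h)
    have h2 := hw0 (-c) hnc hposc
    rw [map_neg] at h2
    exact (hsplit _ (hRW w0 c hc)).mpr h2
  have hsubpair : pair (lam - actP w⁻¹ (ϖ j)) a = pair lam a - pair (ϖ j) b := by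
    rw [map_sub, AddMonoidHom.sub_apply, hpairinv]
  rw [hmul, hsubpair]
  have hcR : actQ (w0P j) b ∈ R := hRW (w0P j) b hbR
  have key : (if ¬ pos b then (1:ℤ) else 0) + pair (ϖ j) b
      = (if ¬ pos (actQ w0 (actQ (w0P j) b)) then (1:ℤ) else 0) := by
    by_cases hpb : pos b
    · rcases hminf b hbR hpb with hp | hp
      · have h1 : ¬ pos (actQ (w0P j) b) := hw0P1 j b hbR hpb hp
        have h2 : pos (actQ w0 (actQ (w0P j) b)) := hw0n _ hcR h1
        simp [hpb, hp, h2]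
      · have h1 : pos (actQ (w0P j) b) := hw0P2 j b hbR hpb (by omega)
        have h2 : ¬ pos (actQ w0 (actQ (w0P j) b)) := hw0 _ hcR h1
        simp [hpb, hp, h2]
    · have hnbR : (-b) ∈ R := hRneg b hbR
      have hpnb : pos (-b) := by
        by_contra h; exact hpb ((hsplit b hbR).mpr h)
      have hpn : pair (ϖ j) (-b) = - pair (ϖ j) b := map_neg (pair (ϖ j)) b
      rcases hminf (-b) hnbR hpnb with hp | hp
      · have hp0 : pair (ϖ j) b = 0 := by rw [hpn] at hp; omega
        have h1 : ¬ pos (actQ (w0P j) (-b)) := hw0P1 j (-b) hnbR hpnb (by rw [hpn, hp0]; ring)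
        rw [map_neg] at h1
        have h2 : pos (actQ (w0P j) b) := (hsplit _ hcR).mpr h1
        have h3 : ¬ pos (actQ w0 (actQ (w0P j) b)) := hw0 _ hcR h2
        simp [hpb, hp0, h3]
      · have hp1 : pair (ϖ j) b = -1 := by rw [hpn] at hp; omega
        have h1 : pos (actQ (w0P j) (-b)) := hw0P2 j (-b) hnbR hpnb (by rw [hpn, hp1]; norm_num)
        rw [map_neg] at h1
        have h2 : ¬ pos (actQ (w0P j) b) := fun h => ((hsplit _ hcR).mp h) h1
        have h3 : pos (actQ w0 (actQ (w0P j) b)) := hw0n _ hcR h2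
        simp [hpb, hp1, h3]
  omega
end

section
/- An element w t_λ of the extended affine Weyl group, with w ∈ W and λ ∈ P∨, lies in (W̃^P)_aff if and only if for every root α ∈ R_P⁺ one has ⟨λ, α⟩ = 0 when w(α) > 0 and ⟨λ, α⟩ = −1 when w(α) < 0. -/
/-- Action of the (extended) affine Weyl group element `x = w t_λ` (encoded as the
pair `(w, λ) : W × Pv`) on an affine root `β = (a, n)`, i.e. `a + nδ`:
`w t_λ (a + nδ) = w(a) + (n − ⟨λ, a⟩)δ`. -/
def affAct {W QL Pv : Type} [Group W] [AddCommGroup QL] [AddCommGroup Pv]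
    (actQ : W →* Multiplicative (AddAut QL)) (pair : Pv →+ QL →+ ℤ) (x : W × Pv) (β : QL × ℤ) :
    QL × ℤ :=
  (Multiplicative.toAdd (actQ x.1) β.1, β.2 - pair x.2 β.1)

/-- Positivity of a real affine root `a + nδ`. -/
def affPos {QL : Type} (R : Set QL) (pos : QL → Prop) (β : QL × ℤ) : Prop :=
  β.1 ∈ R ∧ (0 < β.2 ∨ (β.2 = 0 ∧ pos β.1))

/-- Multiplication in the (extended) affine Weyl group `W ⋉ P∨`:
`(w t_λ)(v t_μ) = (wv) t_{v⁻¹(λ) + μ}`. -/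
def amul {W Pv : Type} [Group W] [AddCommGroup Pv] (actP : W →* Multiplicative (AddAut Pv))
    (x y : W × Pv) : W × Pv :=
  (x.1 * y.1, Multiplicative.toAdd (actP y.1⁻¹) x.2 + y.2)

/-- Inversion in the (extended) affine Weyl group `W ⋉ P∨`. -/
def ainv {W Pv : Type} [Group W] [AddCommGroup Pv] (actP : W →* Multiplicative (AddAut Pv))
    (x : W × Pv) : W × Pv :=
  (x.1⁻¹, - Multiplicative.toAdd (actP x.1) x.2)

/-- Length of an element of the (extended) affine Weyl group: the number of
positive real affine roots sent to negative affine roots. -/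
noncomputable def alen {W QL Pv : Type} [Group W] [AddCommGroup QL] [AddCommGroup Pv]
    (actQ : W →* Multiplicative (AddAut QL)) (pair : Pv →+ QL →+ ℤ) (R : Set QL) (pos : QL → Prop)
    (x : W × Pv) : ℕ :=
  Set.ncard {β : QL × ℤ | affPos R pos β ∧ ¬ affPos R pos (affAct actQ pair x β)}

/- STATEMENT 9: An element w t_λ of the extended affine Weyl group lies in
(W̃^P)_aff (i.e. sends every positive affine root a + nδ with a ∈ R_P to a
positive affine root) iff for every α ∈ R_P⁺ one has ⟨λ, α⟩ = 0 when w(α) > 0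
and ⟨λ, α⟩ = −1 when w(α) < 0. -/
theorem stmt_9
    (W : Type) [Group W] (QL Pv : Type) [AddCommGroup QL] [AddCommGroup Pv]
    (actQ : W →* Multiplicative (AddAut QL)) (actP : W →* Multiplicative (AddAut Pv))
    (pair : Pv →+ QL →+ ℤ)
    (hequiv : ∀ (w : W) (x : Pv) (a : QL), pair (Multiplicative.toAdd (actP w x)) (Multiplicative.toAdd (actQ w a)) = pair x a)
    (R : Set QL) (pos : QL → Prop)
    (hRfin : R.Finite)
    (hRW : ∀ (w : W) (a : QL), a ∈ R → Multiplicative.toAdd (actQ w a) ∈ R)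
    (hRneg : ∀ a, a ∈ R → -a ∈ R)
    (hsplit : ∀ a ∈ R, pos a ↔ ¬ pos (-a))
    (I : Type) [Fintype I] [DecidableEq I] (α : I → QL)
    (hα : ∀ j, α j ∈ R ∧ pos (α j))
    (hfaith : ∀ u v : W, (∀ a ∈ R, actQ u a = actQ v a) → u = v)
    (RP : Set QL) (hRPsub : RP ⊆ R) (hRPneg : ∀ a, a ∈ RP → -a ∈ RP)
    (w : W) (lam : Pv) :
    (∀ β : QL × ℤ, β.1 ∈ RP → affPos R pos β →
        affPos R pos (affAct actQ pair (w, lam) β))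
      ↔ (∀ a ∈ RP, pos a →
          (pos (Multiplicative.toAdd (actQ w a)) → pair lam a = 0) ∧
          (¬ pos (Multiplicative.toAdd (actQ w a)) → pair lam a = -1)) := by
  constructor
  · intro h a haP hapos
    have haR := hRPsub haP
    have hwaR : Multiplicative.toAdd (actQ w a) ∈ R := hRW w a haR
    have h1 := h (a, 0) haP ⟨haR, Or.inr ⟨rfl, hapos⟩⟩
    have h2 := h (-a, 1) (hRPneg a haP) ⟨hRneg a haR, Or.inl one_pos⟩
    simp only [affAct, affPos, map_neg] at h1 h2
    constructor
    · intro hposw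
      rcases h1.2 with hc | hc
      · rcases h2.2 with hc2 | hc2
        · omega
        · exact absurd hc2.2 ((hsplit _ hwaR).mp hposw)
      · have := hc.1; omega
    · intro hnegw
      rcases h1.2 with hc | hc
      · rcases h2.2 with hc2 | hc2
        · omega
        · omega
      · exact absurd hc.2 hnegw
  · rintro h ⟨a, n⟩ hβP ⟨haR, hn⟩
    simp only at hβP haR hn
    have hwaR : Multiplicative.toAdd (actQ w a) ∈ R := hRW w a haR
    refine ⟨hwaR, ?_⟩
    simp only [affAct]
    by_cases hapos : pos a
    · obtain ⟨h0, h1⟩ := h a hβP hapos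
      by_cases hw : pos (Multiplicative.toAdd (actQ w a))
      · rw [h0 hw]
        rcases hn with hn | hn
        · exact Or.inl (by omega)
        · exact Or.inr ⟨by omega, hw⟩
      · rw [h1 hw]
        exact Or.inl (by rcases hn with hn | hn <;> omega)
    · have hnpos : pos (-a) := by
        by_contra hc; exact hapos ((hsplit a haR).mpr hc)
      have hn1 : 0 < n := by
        rcases hn with hn | hn
        · exact hn
        · exact absurd hn.2 hapos
      obtain ⟨h0, h1⟩ := h (-a) (hRPneg a hβP) hnpos
      simp only [map_neg] at h0 h1
      by_cases hw : pos (-Multiplicative.toAdd (actQ w a))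
      · have := h0 hw
        have hz : pair lam a = 0 := by omega
        rw [hz]; exact Or.inl (by omega)
      · have := h1 hw
        have hz : pair lam a = 1 := by omega
        rw [hz]
        have hwp : pos (Multiplicative.toAdd (actQ w a)) := by
          by_contra hc
          exact hw (by
            have := (hsplit (Multiplicative.toAdd (actQ w a)) hwaR)
            by_contra hc2; exact hc (this.mpr hc2))
        rcases lt_or_eq_of_le (α := ℤ) hn1 with h2 | h2
        · exact Or.inl (by omega)
        · exact Or.inr ⟨by omega, hwp⟩
end
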